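/- Let X be a countable set quasi-ordered by ≤ with no infinite antichain, and let D ⊆ X be downward closed. Then there exists a subset D' ⊆ D such that D' is well-quasi-ordered by the restriction of ≤ (every infinite sequence of elements of D' contains indices i < j with the i-th element ≤ the j-th element) and D = ↓D', i.e., D is the downward closure of D' in X. -/
import Mathlib


/-- In a countable quasi-ordered set with no infinite antichain,
every downward closed set `D` is the downward closure of some subset
`D' ⊆ D` that is well-quasi-ordered by the restriction of `≤`. -/
theorem stmt_1 {X : Type*} [Countable X] (le : X → X → Prop)
    (hrefl : ∀ x, le x x)
    (htrans : ∀ x y z, le x y → le y z → le x z)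
    (hac : ∀ A : Set X, (∀ a ∈ A, ∀ b ∈ A, a ≠ b → ¬ le a b ∧ ¬ le b a) → A.Finite)
    (D : Set X) (hD : ∀ x a, le x a → a ∈ D → x ∈ D) :
    ∃ D' ⊆ D,
      (∀ f : ℕ → X, (∀ n, f n ∈ D') → ∃ i j, i < j ∧ le (f i) (f j)) ∧
      D = {x | ∃ d ∈ D', le x d} := by
  classical
  obtain ⟨e, he⟩ := Countable.exists_injective_nat X
  -- D' : elements of D that are "e-maximal" among things above them in D
  set D' : Set X := {x | x ∈ D ∧ ∀ y ∈ D, le x y → e x ≤ e y} with hD'def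
  have hsub : D' ⊆ D := fun x hx => hx.1
  -- key property: within D', le x y implies e x ≤ e y
  have hkey : ∀ x ∈ D', ∀ y ∈ D', le x y → e x ≤ e y := by
    intro x hx y hy hxy
    exact hx.2 y hy.1 hxy
  -- every element of D is below some element of D'
  have hcover : ∀ x ∈ D, ∃ d ∈ D', le x d := by
    intro x hx
    induction' hn : e x using Nat.strong_induction_on with n ih generalizing x
    by_cases hxD' : x ∈ D'
    · exact ⟨x, hxD', hrefl x⟩
    · have : ∃ y ∈ D, le x y ∧ e y < e x := by
        simp only [hD'def, Set.mem_setOf_eq, not_and, not_forall] at hxD'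
        obtain ⟨y, hyD, hxy, hlt⟩ := hxD' hx
        exact ⟨y, hyD, hxy, Nat.lt_of_not_le hlt⟩
      obtain ⟨y, hyD, hxy, hlt⟩ := this
      obtain ⟨d, hd, hyd⟩ := ih (e y) (hn ▸ hlt) y hyD rfl
      exact ⟨d, hd, htrans _ _ _ hxy hyd⟩
  refine ⟨D', hsub, ?_, ?_⟩
  · -- well-quasi-ordered
    intro f hf
    by_contra hbad
    push_neg at hbad
    obtain ⟨g, hg⟩ := exists_increasing_or_nonincreasing_subseq' le f
    rcases hg with hg | hg
    · exact absurd (hg 0) (hbad (g 0) (g 1) (g.strictMono Nat.zero_lt_one))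
    · -- within subsequence, all pairs fail le forwards; refine with reversed relation
      set f1 : ℕ → X := f ∘ g with hf1
      have hf1mem : ∀ n, f1 n ∈ D' := fun n => hf (g n)
      have hf1bad : ∀ m n, m < n → ¬ le (f1 m) (f1 n) := fun m n h => hg m n h
      obtain ⟨g', hg'⟩ := exists_increasing_or_nonincreasing_subseq' (fun a b => le b a) f1
      set h : ℕ → X := f1 ∘ g' with hh
      have hhmem : ∀ n, h n ∈ D' := fun n => hf1mem (g' n)
      have hhbad : ∀ m n, m < n → ¬ le (h m) (h n) := fun m n hmn =>
        hf1bad (g' m) (g' n) (g'.strictMono hmn)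
      rcases hg' with hg' | hg'
      · -- strictly descending chain: e ∘ h strictly decreasing, impossible
        have hdec : ∀ n, e (h (n + 1)) < e (h n) := by
          intro n
          have hle : le (h (n + 1)) (h n) := hg' n
          have hne : h (n + 1) ≠ h n := by
            intro heq
            exact hhbad n (n + 1) (Nat.lt_succ_self n) (heq ▸ hrefl _)
          exact lt_of_le_of_ne (hkey _ (hhmem _) _ (hhmem _) hle) (fun hc => hne (he hc))
        have : ∀ n, e (h n) + n ≤ e (h 0) := by
          intro n
          induction n with
          | zero => simp
          | succ k ihk => have := hdec k; omega
        exact absurd (this (e (h 0) + 1)) (by omega)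
      · -- infinite antichain
        have hinj : Function.Injective h := by
          intro m n hmn
          by_contra hne
          rcases Nat.lt_or_ge m n with hlt | hge
          · exact hhbad m n hlt (hmn ▸ hrefl _)
          · have hlt : n < m := lt_of_le_of_ne hge (Ne.symm hne)
            exact hhbad n m hlt (hmn ▸ hrefl _)
        have hanti : ∀ a ∈ Set.range h, ∀ b ∈ Set.range h, a ≠ b → ¬ le a b ∧ ¬ le b a := by
          rintro a ⟨m, rfl⟩ b ⟨n, rfl⟩ hne
          rcases Nat.lt_or_ge m n with hlt | hge
          · exact ⟨hhbad m n hlt, hg' m n hlt⟩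
          · have hlt : n < m := lt_of_le_of_ne hge (fun hc => hne (hc ▸ rfl))
            exact ⟨fun hc => (hg' n m hlt) hc, hhbad n m hlt⟩
        exact (Set.infinite_range_of_injective hinj) (hac _ hanti)
  · -- D = downward closure of D'
    ext x
    constructor
    · intro hx
      exact hcover x hx
    · rintro ⟨d, hd, hxd⟩
      exact hD x d hxd (hsub hd)
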